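/- With the setup of the ε-resolvent walk: if the symmetric random walk X on ℤ² with step distribution j is recurrent, then the random walk Y with step distribution c(ε)^{-1} Σ_{n≥1} ε^n j^{(n)}(·) is also recurrent, for every ε ∈ (0,1). -/

import Mathlib

set_option maxHeartbeats 1000000

open Real MeasureTheory

/-- Convolution of two functions on `ℤ²`. -/
noncomputable def convZ2 (f g : ℤ × ℤ → ℝ) : ℤ × ℤ → ℝ :=
  fun x => ∑' y : ℤ × ℤ, f (x - y) * g y

/-- `n`-step transition probabilities (`nStep j n = j^{(n+1)}`). -/
noncomputable def nStep (j : ℤ × ℤ → ℝ) : ℕ → ℤ × ℤ → ℝ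
  | 0 => j
  | (n + 1) => convZ2 (nStep j n) j

/-- Characteristic function of a symmetric step distribution on `ℤ²`. -/
noncomputable def charFnZ2 (f : ℤ × ℤ → ℝ) (θ : ℝ × ℝ) : ℝ :=
  ∑' x : ℤ × ℤ, Real.cos (θ.1 * x.1 + θ.2 * x.2) * f x

/-- Recurrence of a symmetric random walk on `ℤ²` via the Chung–Fuchs criterion:
`∫_{[-π,π]²} dθ/(1-φ(θ)) = ∞`. -/
noncomputable def RecurrentCF (f : ℤ × ℤ → ℝ) : Prop :=
  ∫⁻ θ in Set.Icc ((-π, -π) : ℝ × ℝ) (π, π),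
    ENNReal.ofReal (1 / (1 - charFnZ2 f θ)) = ⊤

/-- angle function -/
noncomputable def angZ (θ : ℝ × ℝ) (x : ℤ × ℤ) : ℝ := θ.1 * x.1 + θ.2 * x.2

lemma angZ_add (θ : ℝ × ℝ) (u y : ℤ × ℤ) : angZ θ (u + y) = angZ θ u + angZ θ y := by
  simp only [angZ, Prod.fst_add, Prod.snd_add]; push_cast; ring

lemma angZ_neg (θ : ℝ × ℝ) (x : ℤ × ℤ) : angZ θ (-x) = -angZ θ x := by
  simp only [angZ, Prod.fst_neg, Prod.snd_neg]; push_cast; ring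

/-- shear equiv -/
def shearE : (ℤ × ℤ) × (ℤ × ℤ) ≃ (ℤ × ℤ) × (ℤ × ℤ) where
  toFun p := (p.1 + p.2, p.2)
  invFun q := (q.1 - q.2, q.2)
  left_inv p := by simp
  right_inv q := by simp

lemma sin_tsum_zero (θ : ℝ × ℝ) (f : ℤ × ℤ → ℝ) (hsym : ∀ x, f (-x) = f x) :
    ∑' x : ℤ × ℤ, Real.sin (angZ θ x) * f x = 0 := by
  have h1 : ∑' x : ℤ × ℤ, Real.sin (angZ θ (Equiv.neg (ℤ × ℤ) x)) * f (Equiv.neg (ℤ × ℤ) x)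
      = ∑' x : ℤ × ℤ, Real.sin (angZ θ x) * f x :=
    (Equiv.neg (ℤ × ℤ)).tsum_eq (fun x => Real.sin (angZ θ x) * f x)
  have h2 : ∀ x : ℤ × ℤ, Real.sin (angZ θ (-x)) * f (-x) = -(Real.sin (angZ θ x) * f x) := by
    intro x; rw [angZ_neg, Real.sin_neg, hsym]; ring
  simp only [Equiv.neg_apply, h2, tsum_neg] at h1
  linarith


lemma charFn_eq (f : ℤ × ℤ → ℝ) (θ : ℝ × ℝ) :
    charFnZ2 f θ = ∑' x : ℤ × ℤ, Real.cos (angZ θ x) * f x := rfl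

section props
variable {f g : ℤ × ℤ → ℝ} (hf : ∀ x, 0 ≤ f x) (hg : ∀ x, 0 ≤ g x)
  (hfs : Summable f) (hgs : Summable g)

include hf hg hfs hgs in
lemma conv_pair_summable :
    Summable (fun p : (ℤ × ℤ) × (ℤ × ℤ) => f (p.1 - p.2) * g p.2) := by
  rw [← shearE.summable_iff]
  have : ((fun p : (ℤ × ℤ) × (ℤ × ℤ) => f (p.1 - p.2) * g p.2) ∘ shearE)
      = fun q : (ℤ × ℤ) × (ℤ × ℤ) => f q.1 * g q.2 := by
    funext q; simp [shearE]
  rw [this]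
  exact hfs.mul_of_nonneg hgs hf hg

include hf hg hfs hgs in
lemma conv_summable : Summable (convZ2 f g) :=
  (conv_pair_summable hf hg hfs hgs).prod

include hf hg in
lemma conv_nonneg : ∀ x, 0 ≤ convZ2 f g x := fun x =>
  tsum_nonneg (fun y => mul_nonneg (hf _) (hg _))

include hf hg hfs hgs in
lemma conv_tsum : ∑' x, convZ2 f g x = (∑' x, f x) * (∑' x, g x) := by
  have h := conv_pair_summable hf hg hfs hgs
  have h1 : ∑' x, convZ2 f g x = ∑' p : (ℤ × ℤ) × (ℤ × ℤ), f (p.1 - p.2) * g p.2 :=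
    (Summable.tsum_prod h).symm
  rw [h1, ← shearE.tsum_eq (fun p : (ℤ × ℤ) × (ℤ × ℤ) => f (p.1 - p.2) * g p.2)]
  have : (fun q : (ℤ × ℤ) × (ℤ × ℤ) => f ((shearE q).1 - (shearE q).2) * g (shearE q).2)
      = fun q : (ℤ × ℤ) × (ℤ × ℤ) => f q.1 * g q.2 := by
    funext q; simp [shearE]
  calc ∑' q : (ℤ × ℤ) × (ℤ × ℤ), f ((shearE q).1 - (shearE q).2) * g (shearE q).2
      = ∑' q : (ℤ × ℤ) × (ℤ × ℤ), f q.1 * g q.2 := by rw [this]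
    _ = ∑' u : ℤ × ℤ, ∑' y : ℤ × ℤ, f u * g y :=
        Summable.tsum_prod (hfs.mul_of_nonneg hgs hf hg)
    _ = (∑' x, f x) * (∑' x, g x) := by
        simp_rw [tsum_mul_left]; exact tsum_mul_right

lemma conv_symm (hf' : ∀ x, f (-x) = f x) (hg' : ∀ x, g (-x) = g x) :
    ∀ x, convZ2 f g (-x) = convZ2 f g x := by
  intro x
  unfold convZ2
  rw [← (Equiv.neg (ℤ × ℤ)).tsum_eq (fun y => f (-x - y) * g y)]
  congr 1; funext y
  simp only [Equiv.neg_apply]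
  rw [hg' y, show -x - -y = -(x - y) by ring, hf']

end props

lemma summable_mul_prod {A B : ℤ × ℤ → ℝ} (hA : Summable A) (hB : Summable B) :
    Summable (fun q : (ℤ × ℤ) × (ℤ × ℤ) => A q.1 * B q.2) := by
  have h := (hA.abs).mul_of_nonneg (hB.abs) (fun _ => abs_nonneg _) (fun _ => abs_nonneg _)
  refine Summable.of_norm_bounded h (fun q => ?_)
  rw [Real.norm_eq_abs, abs_mul]

section mulchar
variable {f g : ℤ × ℤ → ℝ} (hf : ∀ x, 0 ≤ f x) (hg : ∀ x, 0 ≤ g x)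
  (hfs : Summable f) (hgs : Summable g)
  (hf' : ∀ x, f (-x) = f x) (hg' : ∀ x, g (-x) = g x) (θ : ℝ × ℝ)

include hf hfs in
lemma cos_summable : Summable (fun x => Real.cos (angZ θ x) * f x) := by
  refine Summable.of_norm_bounded hfs (fun x => ?_)
  rw [Real.norm_eq_abs, abs_mul, abs_of_nonneg (hf x)]
  exact mul_le_of_le_one_left (hf x) (abs_cos_le_one _)

include hf hfs in
lemma sin_summable : Summable (fun x => Real.sin (angZ θ x) * f x) := by
  refine Summable.of_norm_bounded hfs (fun x => ?_)
  rw [Real.norm_eq_abs, abs_mul, abs_of_nonneg (hf x)]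
  exact mul_le_of_le_one_left (hf x) (abs_sin_le_one _)

include hf hg hfs hgs hf' hg' in
lemma charFn_conv : charFnZ2 (convZ2 f g) θ = charFnZ2 f θ * charFnZ2 g θ := by
  have hpair := conv_pair_summable hf hg hfs hgs
  have hF : Summable (fun p : (ℤ × ℤ) × (ℤ × ℤ) =>
      Real.cos (angZ θ p.1) * (f (p.1 - p.2) * g p.2)) := by
    refine Summable.of_norm_bounded hpair (fun p => ?_)
    rw [Real.norm_eq_abs, abs_mul, abs_of_nonneg (mul_nonneg (hf _) (hg _))]
    exact mul_le_of_le_one_left (mul_nonneg (hf _) (hg _)) (abs_cos_le_one _)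
  have step1 : charFnZ2 (convZ2 f g) θ
      = ∑' p : (ℤ × ℤ) × (ℤ × ℤ), Real.cos (angZ θ p.1) * (f (p.1 - p.2) * g p.2) := by
    rw [charFn_eq, Summable.tsum_prod hF]
    unfold convZ2
    congr 1; funext x
    exact (tsum_mul_left).symm
  rw [step1, ← shearE.tsum_eq (fun p : (ℤ × ℤ) × (ℤ × ℤ) =>
      Real.cos (angZ θ p.1) * (f (p.1 - p.2) * g p.2))]
  have expand : (fun q : (ℤ × ℤ) × (ℤ × ℤ) =>
      Real.cos (angZ θ (shearE q).1) * (f ((shearE q).1 - (shearE q).2) * g (shearE q).2))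
      = fun q : (ℤ × ℤ) × (ℤ × ℤ) =>
        (Real.cos (angZ θ q.1) * f q.1) * (Real.cos (angZ θ q.2) * g q.2)
        - (Real.sin (angZ θ q.1) * f q.1) * (Real.sin (angZ θ q.2) * g q.2) := by
    funext q
    have h1 : (shearE q).1 = q.1 + q.2 := rfl
    have h2 : (shearE q).2 = q.2 := rfl
    rw [h1, h2, add_sub_cancel_right, angZ_add, Real.cos_add]
    ring
  have sc1 := cos_summable hf hfs θ
  have sc2 := cos_summable hg hgs θ
  have ss1 := sin_summable hf hfs θ
  have ss2 := sin_summable hg hgs θ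
  have sumCC : Summable (fun q : (ℤ × ℤ) × (ℤ × ℤ) =>
      (Real.cos (angZ θ q.1) * f q.1) * (Real.cos (angZ θ q.2) * g q.2)) :=
    summable_mul_prod sc1 sc2
  have sumSS : Summable (fun q : (ℤ × ℤ) × (ℤ × ℤ) =>
      (Real.sin (angZ θ q.1) * f q.1) * (Real.sin (angZ θ q.2) * g q.2)) :=
    summable_mul_prod ss1 ss2
  have prodtsum : ∀ (A B : ℤ × ℤ → ℝ), Summable (fun q : (ℤ × ℤ) × (ℤ × ℤ) => A q.1 * B q.2) →
      ∑' q : (ℤ × ℤ) × (ℤ × ℤ), A q.1 * B q.2 = (∑' x, A x) * (∑' x, B x) := by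
    intro A B hAB
    rw [Summable.tsum_prod hAB]
    simp_rw [tsum_mul_left]
    exact tsum_mul_right
  calc ∑' q : (ℤ × ℤ) × (ℤ × ℤ),
        Real.cos (angZ θ (shearE q).1) * (f ((shearE q).1 - (shearE q).2) * g (shearE q).2)
      = ∑' q : (ℤ × ℤ) × (ℤ × ℤ),
        ((Real.cos (angZ θ q.1) * f q.1) * (Real.cos (angZ θ q.2) * g q.2)
        - (Real.sin (angZ θ q.1) * f q.1) * (Real.sin (angZ θ q.2) * g q.2)) := by rw [expand]
    _ = (∑' q : (ℤ × ℤ) × (ℤ × ℤ),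
          (Real.cos (angZ θ q.1) * f q.1) * (Real.cos (angZ θ q.2) * g q.2))
        - ∑' q : (ℤ × ℤ) × (ℤ × ℤ),
          (Real.sin (angZ θ q.1) * f q.1) * (Real.sin (angZ θ q.2) * g q.2) :=
        Summable.tsum_sub sumCC sumSS
    _ = charFnZ2 f θ * charFnZ2 g θ := by
        have e1 := prodtsum (fun x => Real.cos (angZ θ x) * f x)
          (fun x => Real.cos (angZ θ x) * g x) sumCC
        have e2 := prodtsum (fun x => Real.sin (angZ θ x) * f x)
          (fun x => Real.sin (angZ θ x) * g x) sumSS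
        rw [e1, e2, sin_tsum_zero θ f hf', sin_tsum_zero θ g hg', charFn_eq, charFn_eq]
        ring

end mulchar


section nstep
variable {j : ℤ × ℤ → ℝ} (hpos : ∀ x, 0 ≤ j x) (hsym : ∀ x, j (-x) = j x)
  (hsummable : Summable j) (hsum : ∑' x : ℤ × ℤ, j x = 1)

include hpos hsym hsummable hsum in
lemma nStep_props (n : ℕ) :
    (∀ x, 0 ≤ nStep j n x) ∧ (∀ x, nStep j n (-x) = nStep j n x) ∧
      Summable (nStep j n) ∧ (∑' x, nStep j n x = 1) := by
  induction n with
  | zero => exact ⟨hpos, hsym, hsummable, hsum⟩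
  | succ n ih =>
    obtain ⟨h1, h2, h3, h4⟩ := ih
    refine ⟨conv_nonneg h1 hpos, conv_symm h2 hsym, conv_summable h1 hpos h3 hsummable, ?_⟩
    rw [show nStep j (n+1) = convZ2 (nStep j n) j from rfl,
      conv_tsum h1 hpos h3 hsummable, h4, hsum, mul_one]

include hpos hsym hsummable hsum in
lemma nStep_charFn (θ : ℝ × ℝ) (n : ℕ) :
    charFnZ2 (nStep j n) θ = (charFnZ2 j θ) ^ (n + 1) := by
  induction n with
  | zero => simp [nStep]
  | succ n ih =>
    obtain ⟨h1, h2, h3, h4⟩ := nStep_props hpos hsym hsummable hsum n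
    rw [show nStep j (n+1) = convZ2 (nStep j n) j from rfl,
      charFn_conv h1 hpos h3 hsummable h2 hsym θ, ih]
    ring

include hpos hsummable hsum in
lemma charFn_abs_le (θ : ℝ × ℝ) : |charFnZ2 j θ| ≤ 1 := by
  rw [charFn_eq]
  calc |∑' x : ℤ × ℤ, Real.cos (angZ θ x) * j x|
      ≤ ∑' x : ℤ × ℤ, |Real.cos (angZ θ x) * j x| := by
        simpa [Real.norm_eq_abs, abs_mul] using
          norm_tsum_le_tsum_norm (f := fun x : ℤ × ℤ => Real.cos (angZ θ x) * j x)
            (by simpa [Real.norm_eq_abs, abs_mul] using (cos_summable hpos hsummable θ).abs)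
    _ ≤ ∑' x : ℤ × ℤ, j x := by
        refine Summable.tsum_le_tsum (fun x => ?_) ((cos_summable hpos hsummable θ).abs) hsummable
        rw [abs_mul, abs_of_nonneg (hpos x)]
        exact mul_le_of_le_one_left (hpos x) (abs_cos_le_one _)
    _ = 1 := hsum

end nstep

section main
variable {j : ℤ × ℤ → ℝ} (hpos : ∀ x, 0 ≤ j x) (hsym : ∀ x, j (-x) = j x)
  (hsummable : Summable j) (hsum : ∑' x : ℤ × ℤ, j x = 1)
  {ε : ℝ} (hε0 : 0 < ε) (hε1 : ε < 1)

include hpos hsym hsummable hsum hε0 hε1 in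
lemma charFn_Y (θ : ℝ × ℝ) :
    charFnZ2 (fun x => (ε / (1 - ε))⁻¹ * ∑' n : ℕ, ε ^ (n + 1) * nStep j n x) θ
      = (ε / (1 - ε))⁻¹ * (ε * charFnZ2 j θ * (1 - ε * charFnZ2 j θ)⁻¹) := by
  set φ := charFnZ2 j θ with hφdef
  have hn := fun n => nStep_props hpos hsym hsummable hsum n
  -- geometric summability
  have hgeo : Summable (fun n : ℕ => ε ^ (n + 1)) := by
    simpa [pow_succ, mul_comm] using (summable_geometric_of_lt_one hε0.le hε1).mul_left ε
  -- summability of the double family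
  have hG : Summable (fun p : ℕ × (ℤ × ℤ) => ε ^ (p.1 + 1) * nStep j p.1 p.2) := by
    have hGnn : 0 ≤ (fun p : ℕ × (ℤ × ℤ) => ε ^ (p.1 + 1) * nStep j p.1 p.2) :=
      fun p => mul_nonneg (pow_nonneg hε0.le _) ((hn p.1).1 p.2)
    have h1 : ∀ n : ℕ, Summable (fun x : ℤ × ℤ => ε ^ (n + 1) * nStep j n x) :=
      fun n => ((hn n).2.2.1).mul_left _
    have h2 : Summable (fun n : ℕ => ∑' x, ε ^ (n + 1) * nStep j n x) := by
      have : (fun n : ℕ => ∑' x, ε ^ (n + 1) * nStep j n x) = fun n : ℕ => ε ^ (n + 1) := by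
        funext n; rw [tsum_mul_left, (hn n).2.2.2, mul_one]
      rw [this]; exact hgeo
    exact (summable_prod_of_nonneg hGnn).2 ⟨h1, h2⟩
  have hF : Summable (Function.uncurry fun (n : ℕ) (x : ℤ × ℤ) =>
      Real.cos (angZ θ x) * (ε ^ (n + 1) * nStep j n x)) := by
    refine Summable.of_norm_bounded hG (fun p => ?_)
    have h0 : 0 ≤ ε ^ (p.1 + 1) * nStep j p.1 p.2 :=
      mul_nonneg (pow_nonneg hε0.le _) ((hn p.1).1 p.2)
    rw [Function.uncurry, Real.norm_eq_abs, abs_mul, abs_of_nonneg h0]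
    exact mul_le_of_le_one_left h0 (abs_cos_le_one _)
  -- main computation
  rw [charFn_eq]
  have step0 : ∀ x : ℤ × ℤ,
      Real.cos (angZ θ x) * ((ε / (1 - ε))⁻¹ * ∑' n : ℕ, ε ^ (n + 1) * nStep j n x)
      = (ε / (1 - ε))⁻¹ * (Real.cos (angZ θ x) * ∑' n : ℕ, ε ^ (n + 1) * nStep j n x) :=
    fun x => by ring
  rw [tsum_congr step0, tsum_mul_left]
  congr 1
  have step1 : ∀ x : ℤ × ℤ,
      Real.cos (angZ θ x) * ∑' n : ℕ, ε ^ (n + 1) * nStep j n x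
      = ∑' n : ℕ, Real.cos (angZ θ x) * (ε ^ (n + 1) * nStep j n x) :=
    fun x => tsum_mul_left.symm
  rw [tsum_congr step1, Summable.tsum_comm hF]
  have step2 : ∀ n : ℕ,
      (∑' x : ℤ × ℤ, Real.cos (angZ θ x) * (ε ^ (n + 1) * nStep j n x)) = (ε * φ) ^ (n + 1) := by
    intro n
    have : ∀ x : ℤ × ℤ, Real.cos (angZ θ x) * (ε ^ (n + 1) * nStep j n x)
        = ε ^ (n + 1) * (Real.cos (angZ θ x) * nStep j n x) := fun x => by ring
    rw [tsum_congr this, tsum_mul_left, ← charFn_eq,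
      nStep_charFn hpos hsym hsummable hsum θ n, ← hφdef, mul_pow]
  rw [tsum_congr step2]
  have hr : ‖ε * φ‖ < 1 := by
    rw [Real.norm_eq_abs, abs_mul, abs_of_pos hε0]
    calc ε * |φ| ≤ ε * 1 := by
          have := charFn_abs_le hpos hsummable hsum θ
          nlinarith
      _ < 1 := by linarith
  have : ∀ n : ℕ, (ε * φ) ^ (n + 1) = (ε * φ) * (ε * φ) ^ n := fun n => by ring
  rw [tsum_congr this, tsum_mul_left, tsum_geometric_of_norm_lt_one hr]

end main

section thm
variable {j : ℤ × ℤ → ℝ} (hpos : ∀ x, 0 ≤ j x) (hsym : ∀ x, j (-x) = j x)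
  (hsummable : Summable j) (hsum : ∑' x : ℤ × ℤ, j x = 1)
  {ε : ℝ} (hε0 : 0 < ε) (hε1 : ε < 1)

include hpos hsym hsummable hsum hε0 hε1 in
lemma pointwise_bound (θ : ℝ × ℝ) :
    ENNReal.ofReal (1 - ε) * ENNReal.ofReal (1 / (1 - charFnZ2 j θ))
      ≤ ENNReal.ofReal (1 / (1 - charFnZ2
          (fun x => (ε / (1 - ε))⁻¹ * ∑' n : ℕ, ε ^ (n + 1) * nStep j n x) θ)) := by
  set φ := charFnZ2 j θ with hφdef
  have hφabs : |φ| ≤ 1 := charFn_abs_le hpos hsummable hsum θ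
  have hφ1 : φ ≤ 1 := (abs_le.mp hφabs).2
  have hεφ : ε * φ ≤ ε := by nlinarith
  have hden : 0 < 1 - ε * φ := by linarith
  have hψ : 1 - charFnZ2 (fun x => (ε / (1 - ε))⁻¹ * ∑' n : ℕ, ε ^ (n + 1) * nStep j n x) θ
      = (1 - φ) / (1 - ε * φ) := by
    rw [charFn_Y hpos hsym hsummable hsum hε0 hε1 θ, ← hφdef]
    rw [show (ε / (1 - ε))⁻¹ = (1 - ε) / ε by rw [inv_div]]
    field_simp
    ring
  rw [hψ, ← ENNReal.ofReal_mul (by linarith)]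
  apply ENNReal.ofReal_le_ofReal
  rcases lt_or_eq_of_le hφ1 with h | h
  · have h1φ : 0 < 1 - φ := by linarith
    rw [one_div_div, one_div, ← div_eq_mul_inv, div_le_div_iff_of_pos_right h1φ]
    linarith
  · rw [← h]
    simp
end thm

/-- if the symmetric walk `X` with step distribution `j` is recurrent,
then so is the ε-resolvent walk `Y` with step distribution
`c(ε)⁻¹ Σ_{n≥1} ε^n j^{(n)}`, for every `ε ∈ (0,1)`. -/
theorem resolvent_walk_recurrent
    (j : ℤ × ℤ → ℝ) (hpos : ∀ x, 0 ≤ j x) (hsym : ∀ x, j (-x) = j x)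
    (hsummable : Summable j) (hsum : ∑' x : ℤ × ℤ, j x = 1)
    (hrec : RecurrentCF j)
    (ε : ℝ) (hε0 : 0 < ε) (hε1 : ε < 1) :
    RecurrentCF (fun x => (ε / (1 - ε))⁻¹ * ∑' n : ℕ, ε ^ (n + 1) * nStep j n x) := by
  unfold RecurrentCF at hrec ⊢
  have hc0 : ENNReal.ofReal (1 - ε) ≠ 0 :=
    (ENNReal.ofReal_pos.mpr (by linarith)).ne'
  refine top_unique ?_
  calc (⊤ : ENNReal)
      = ENNReal.ofReal (1 - ε) * ∫⁻ θ in Set.Icc ((-π, -π) : ℝ × ℝ) (π, π),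
          ENNReal.ofReal (1 / (1 - charFnZ2 j θ)) := by
        rw [hrec, ENNReal.mul_top hc0]
    _ = ∫⁻ θ in Set.Icc ((-π, -π) : ℝ × ℝ) (π, π),
          ENNReal.ofReal (1 - ε) * ENNReal.ofReal (1 / (1 - charFnZ2 j θ)) :=
        (lintegral_const_mul' _ _ ENNReal.ofReal_ne_top).symm
    _ ≤ _ := lintegral_mono
        (fun θ => pointwise_bound hpos hsym hsummable hsum hε0 hε1 θ)
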